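/- There exists a real number x > 0 (depending only on the vertices v_1, …, v_m) such that for every closed axis-parallel square Q of side length x and every p ∈ ℝ², there exist an index i ∈ {1, …, m} and a point q ∈ ℝ² with (p + S) ∩ Q = E_i(q) ∩ Q; that is, every translate of S intersects every sufficiently small square exactly like the translate of one of its wedges. -/

import Mathlib

noncomputable section

/-- The planar cross product of two vectors in `ℝ × ℝ`. -/
def cross (a b : ℝ × ℝ) : ℝ := a.1 * b.2 - a.2 * b.1

/-- The vertices `v 1, …, v m` (indexed cyclically) are in strictly convex position,
listed in clockwise order: for every directed edge `v i → v (i+1)`, all other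
vertices lie strictly on its right side. -/
def ClockwiseConvex {m : ℕ} (v : ZMod m → ℝ × ℝ) : Prop :=
  ∀ i j : ZMod m, j ≠ i → j ≠ i + 1 → cross (v (i + 1) - v i) (v j - v i) < 0

/-- Central symmetry: there is a center `c` with `v (i + n) = 2 c - v i` for all `i`. -/
def CentSym (n : ℕ) (v : ZMod (2 * n) → ℝ × ℝ) : Prop :=
  ∃ c : ℝ × ℝ, ∀ i : ZMod (2 * n), v (i + (n : ZMod (2 * n))) = (2 : ℝ) • c - v i

/-- The translate `E_i(p)` of the closed wedge
`E_i = {s • (v (i-1) - v i) + t • (v (i+1) - v i) : s, t ≥ 0}` with apex at `p`. -/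
def Wedge {m : ℕ} (v : ZMod m → ℝ × ℝ) (i : ZMod m) (p : ℝ × ℝ) : Set (ℝ × ℝ) :=
  {x | ∃ s t : ℝ, 0 ≤ s ∧ 0 ≤ t ∧ x = p + s • (v (i - 1) - v i) + t • (v (i + 1) - v i)}

namespace Pf

variable {m : ℕ}

/-- edge functional -/
def fe (v : ZMod m → ℝ × ℝ) (j : ZMod m) (y : ℝ × ℝ) : ℝ :=
  cross (v (j + 1) - v j) (y - v j)

lemma fe_cont (v : ZMod m → ℝ × ℝ) (j : ZMod m) : Continuous (fe v j) := by
  unfold fe cross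
  fun_prop

lemma fe_comb (v : ZMod m → ℝ × ℝ) (j : ZMod m) {a b : ℝ} (hab : a + b = 1) (x y : ℝ × ℝ) :
    fe v j (a • x + b • y) = a * fe v j x + b * fe v j y := by
  have hb : b = 1 - a := by linarith
  subst hb
  simp only [fe, cross, Prod.smul_fst, Prod.smul_snd, Prod.fst_add, Prod.snd_add,
    Prod.fst_sub, Prod.snd_sub, smul_eq_mul]
  ring

lemma one_ne_zero' (hm : 3 ≤ m) : (1 : ZMod m) ≠ 0 := by
  intro h
  have h1 : ((1 : ℕ) : ZMod m) = 0 := by exact_mod_cast h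
  rw [ZMod.natCast_eq_zero_iff] at h1
  have := Nat.le_of_dvd one_pos h1
  omega

lemma two_ne_zero' (hm : 3 ≤ m) : (2 : ZMod m) ≠ 0 := by
  intro h
  have h1 : ((2 : ℕ) : ZMod m) = 0 := by exact_mod_cast h
  rw [ZMod.natCast_eq_zero_iff] at h1
  have := Nat.le_of_dvd two_pos h1
  omega

end Pf

namespace Pf
variable {m : ℕ} (v : ZMod m → ℝ × ℝ)

lemma fe_self (j : ZMod m) : fe v j (v j) = 0 := by
  simp only [fe, cross, sub_self, Prod.fst_zero, Prod.snd_zero]; ring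

lemma fe_succ (j : ZMod m) : fe v j (v (j + 1)) = 0 := by
  simp only [fe, cross, Prod.fst_sub, Prod.snd_sub]; ring

lemma fe_vertex_neg (hcw : ClockwiseConvex v) {j k : ZMod m} (h1 : k ≠ j) (h2 : k ≠ j + 1) :
    fe v j (v k) < 0 := hcw j k h1 h2

lemma fe_vertex_nonpos (hcw : ClockwiseConvex v) (j k : ZMod m) : fe v j (v k) ≤ 0 := by
  by_cases h1 : k = j
  · rw [h1, fe_self]
  by_cases h2 : k = j + 1
  · rw [h2, fe_succ]
  exact (fe_vertex_neg v hcw h1 h2).le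

lemma cpos (hm : 3 ≤ m) (hcw : ClockwiseConvex v) (k : ZMod m) :
    0 < cross (v (k - 1) - v k) (v (k + 1) - v k) := by
  have e1 : k - 1 ≠ k := by
    intro h
    have h2 : k - 1 + 1 = k + 1 := by rw [h]
    rw [sub_add_cancel] at h2
    exact one_ne_zero' hm (left_eq_add.mp h2)
  have e2 : k - 1 ≠ k + 1 := by
    intro h
    have h2 : k - 1 + 1 = k + 1 + 1 := by rw [h]
    rw [sub_add_cancel] at h2
    have h3 : k = k + 2 := h2.trans (by ring)
    exact two_ne_zero' hm (left_eq_add.mp h3)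
  have h := hcw k (k - 1) e1 e2
  simp only [cross] at h ⊢
  nlinarith [h]

lemma fe_pred (k : ZMod m) (y : ℝ × ℝ) :
    fe v (k - 1) y = cross (v k - v (k - 1)) (y - v (k - 1)) := by
  rw [fe, sub_add_cancel]

lemma rep_aux (A B C y : ℝ × ℝ) (hc : cross (A - B) (C - B) ≠ 0) :
    y = B + ((-(cross (C - B) (y - B))) / cross (A - B) (C - B)) • (A - B)
          + ((-(cross (B - A) (y - A))) / cross (A - B) (C - B)) • (C - B) := by
  simp only [cross, Prod.fst_sub, Prod.snd_sub] at hc ⊢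
  rw [Prod.ext_iff]
  constructor
  · simp only [Prod.fst_add, Prod.smul_fst, Prod.fst_sub, smul_eq_mul]
    rw [div_mul_eq_mul_div, div_mul_eq_mul_div, add_assoc, ← add_div, add_div' _ _ _ hc, eq_div_iff hc]
    ring
  · simp only [Prod.snd_add, Prod.smul_snd, Prod.snd_sub, smul_eq_mul]
    rw [div_mul_eq_mul_div, div_mul_eq_mul_div, add_assoc, ← add_div, add_div' _ _ _ hc, eq_div_iff hc]
    ring

lemma rep (hm : 3 ≤ m) (hcw : ClockwiseConvex v) (k : ZMod m) (y : ℝ × ℝ) :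
    y = v k + ((-(fe v k y)) / cross (v (k - 1) - v k) (v (k + 1) - v k)) • (v (k - 1) - v k)
          + ((-(fe v (k - 1) y)) / cross (v (k - 1) - v k) (v (k + 1) - v k)) • (v (k + 1) - v k) := by
  rw [fe, fe_pred]
  exact rep_aux (v (k-1)) (v k) (v (k+1)) y (cpos v hm hcw k).ne'

lemma wedge_mem_iff (hm : 3 ≤ m) (hcw : ClockwiseConvex v) (k : ZMod m) (y : ℝ × ℝ) :
    y ∈ Wedge v k (v k) ↔ fe v (k - 1) y ≤ 0 ∧ fe v k y ≤ 0 := by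
  have hc := cpos v hm hcw k
  constructor
  · rintro ⟨s, t, hs, ht, rfl⟩
    constructor
    · rw [fe_pred]
      simp only [cross, Prod.fst_sub, Prod.snd_sub, Prod.fst_add, Prod.snd_add,
        Prod.smul_fst, Prod.smul_snd, smul_eq_mul] at hc ⊢
      nlinarith
    · rw [fe]
      simp only [cross, Prod.fst_sub, Prod.snd_sub, Prod.fst_add, Prod.snd_add,
        Prod.smul_fst, Prod.smul_snd, smul_eq_mul] at hc ⊢
      nlinarith
  · rintro ⟨h1, h2⟩
    exact ⟨_, _, div_nonneg (neg_nonneg.mpr h2) hc.le,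
      div_nonneg (neg_nonneg.mpr h1) hc.le, rep v hm hcw k y⟩
end Pf

namespace Pf
variable {m : ℕ} (v : ZMod m → ℝ × ℝ)

lemma hull_subset (hcw : ClockwiseConvex v) :
    convexHull ℝ (Set.range v) ⊆ {y | ∀ j, fe v j y ≤ 0} := by
  apply convexHull_min
  · rintro _ ⟨k, rfl⟩ j
    exact fe_vertex_nonpos v hcw j k
  · intro x hx y hy a b ha hb hab
    intro j
    rw [fe_comb v j hab]
    have h1 : a * fe v j x ≤ 0 := mul_nonpos_of_nonneg_of_nonpos ha (hx j)
    have h2 : b * fe v j y ≤ 0 := mul_nonpos_of_nonneg_of_nonpos hb (hy j)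
    linarith

lemma subset_hull (hm : 3 ≤ m) (hcw : ClockwiseConvex v) (y : ℝ × ℝ)
    (hy : ∀ j, fe v j y ≤ 0) : y ∈ convexHull ℝ (Set.range v) := by
  haveI : NeZero m := ⟨by omega⟩
  by_contra hn
  obtain ⟨φ, u, hu, huy⟩ := geometric_hahn_banach_closed_point
    (convex_convexHull ℝ _) ((Set.finite_range v).isClosed_convexHull ℝ) hn
  obtain ⟨k, hk⟩ := Finite.exists_max (fun i => φ (v i))
  obtain ⟨s, t, hs, ht, hrep⟩ := (wedge_mem_iff v hm hcw k y).mpr ⟨hy (k - 1), hy k⟩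
  have hφy : φ y = φ (v k) + s * (φ (v (k - 1)) - φ (v k)) + t * (φ (v (k + 1)) - φ (v k)) := by
    rw [hrep]
    simp [map_add, map_smul, map_sub, smul_eq_mul]
  have h1 : φ (v (k - 1)) - φ (v k) ≤ 0 := by have := hk (k - 1); simp at this ⊢; linarith
  have h2 : φ (v (k + 1)) - φ (v k) ≤ 0 := by have := hk (k + 1); simp at this ⊢; linarith
  have hvk : φ (v k) < u := hu (v k) (subset_convexHull ℝ _ ⟨k, rfl⟩)
  nlinarith [mul_nonpos_of_nonneg_of_nonpos hs h1, mul_nonpos_of_nonneg_of_nonpos ht h2]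
end Pf

namespace Pf
variable {m : ℕ} (v : ZMod m → ℝ × ℝ)

lemma comb_form (A B : ℝ × ℝ) (s : ℝ) : B + s • (A - B) = (1 - s) • B + s • A := by
  rw [smul_sub, sub_smul, one_smul]; abel

lemma cover (hm : 3 ≤ m) (hcw : ClockwiseConvex v) (y : ℝ × ℝ)
    (hmem : y ∈ convexHull ℝ (Set.range v)) :
    ∃ i0 : ZMod m, ∀ j, j ≠ i0 → j ≠ i0 + 1 → fe v j y < 0 := by
  haveI : NeZero m := ⟨by omega⟩
  have hy : ∀ j, fe v j y ≤ 0 := hull_subset v hcw hmem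
  by_cases hall : ∀ j, fe v j y < 0
  · exact ⟨0, fun j _ _ => hall j⟩
  push_neg at hall
  obtain ⟨k, hk⟩ := hall
  have hk0 : fe v k y = 0 := le_antisymm (hy k) hk
  -- representation at vertex k+1
  have hrep := rep v hm hcw (k + 1) y
  rw [add_sub_cancel_right] at hrep
  set c := cross (v k - v (k + 1)) (v (k + 1 + 1) - v (k + 1)) with hc
  have hcpos : 0 < c := by
    have := cpos v hm hcw (k + 1)
    rwa [add_sub_cancel_right] at this
  set s : ℝ := -fe v (k + 1) y / c with hs
  have hs0 : 0 ≤ s := div_nonneg (neg_nonneg.mpr (hy (k + 1))) hcpos.le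
  rw [hk0] at hrep
  simp only [neg_zero, zero_div, zero_smul, add_zero] at hrep
  rw [comb_form] at hrep
  -- s ≤ 1
  have hcomb : ∀ j, fe v j y = (1 - s) * fe v j (v (k + 1)) + s * fe v j (v k) := by
    intro j
    rw [hrep, fe_comb v j (by ring)]
  have h21 : (k : ZMod m) + 1 ≠ k - 1 := by
    intro h
    have h2 : k + 1 + 1 = k - 1 + 1 := by rw [h]
    rw [sub_add_cancel] at h2
    have h3 : k = k + 2 := (h2.trans (by ring)).symm.trans (by ring)
    exact two_ne_zero' hm (left_eq_add.mp h3)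
  have hprev : fe v (k - 1) (v (k + 1)) < 0 := by
    apply fe_vertex_neg v hcw h21
    rw [sub_add_cancel]
    intro h
    exact one_ne_zero' hm (left_eq_add.mp h.symm)
  have hprev0 : fe v (k - 1) (v k) = 0 := by
    have := fe_succ v (k - 1)
    rwa [sub_add_cancel] at this
  have hs1 : s ≤ 1 := by
    have := hy (k - 1)
    rw [hcomb (k - 1), hprev0] at this
    nlinarith
  by_cases hse : s = 1
  · -- y = v k
    have hyk : y = v k := by rw [hrep, hse]; simp
    refine ⟨k - 1, fun j hj1 hj2 => ?_⟩
    rw [sub_add_cancel] at hj2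
    rw [hyk]
    apply fe_vertex_neg v hcw (fun h => hj2 h.symm)
    intro h
    exact hj1 (by rw [h, add_sub_cancel_right])
  · have hslt : s < 1 := lt_of_le_of_ne hs1 hse
    refine ⟨k, fun j hj1 hj2 => ?_⟩
    rw [hcomb j]
    have h1 : fe v j (v (k + 1)) < 0 := by
      apply fe_vertex_neg v hcw (fun h => hj2 h.symm)
      intro h
      exact hj1 (add_right_cancel h).symm
    have h2 : fe v j (v k) ≤ 0 := fe_vertex_nonpos v hcw j k
    nlinarith
end Pf

namespace Pf
variable {m : ℕ} (v : ZMod m → ℝ × ℝ)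

set_option maxHeartbeats 2000000 in
lemma wedge_avoid_gen (u1 u2 p1 p2 a1 a2 x : ℝ) (hc : u1 * p2 - u2 * p1 ≠ 0) (hx : 0 < x) :
    ∃ q1 q2 : ℝ, ∀ s t : ℝ, 0 ≤ s → 0 ≤ t →
      ¬ (a1 ≤ q1 + s * u1 + t * p1 ∧ a2 ≤ q2 + s * u2 + t * p2 ∧
         q1 + s * u1 + t * p1 ≤ a1 + x ∧ q2 + s * u2 + t * p2 ≤ a2 + x) := by
  set n1 : ℝ := Real.sqrt (u1 ^ 2 + u2 ^ 2) with hn1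
  set n2 : ℝ := Real.sqrt (p1 ^ 2 + p2 ^ 2) with hn2
  have hn1sq : n1 ^ 2 = u1 ^ 2 + u2 ^ 2 := Real.sq_sqrt (by positivity)
  have hn2sq : n2 ^ 2 = p1 ^ 2 + p2 ^ 2 := Real.sq_sqrt (by positivity)
  have hn1nn : 0 ≤ n1 := Real.sqrt_nonneg _
  have hn2nn : 0 ≤ n2 := Real.sqrt_nonneg _
  have hn1pos : 0 < n1 := by
    rcases hn1nn.lt_or_eq with h | h
    · exact h
    · exfalso
      have hu1 : u1 = 0 := by nlinarith [sq_nonneg u1, sq_nonneg u2]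
      have hu2 : u2 = 0 := by nlinarith [sq_nonneg u1, sq_nonneg u2]
      exact hc (by rw [hu1, hu2]; ring)
  have hn2pos : 0 < n2 := by
    rcases hn2nn.lt_or_eq with h | h
    · exact h
    · exfalso
      have hp1 : p1 = 0 := by nlinarith [sq_nonneg p1, sq_nonneg p2]
      have hp2 : p2 = 0 := by nlinarith [sq_nonneg p1, sq_nonneg p2]
      exact hc (by rw [hp1, hp2]; ring)
  have hCS : (u1 * p1 + u2 * p2) ^ 2 ≤ n1 ^ 2 * n2 ^ 2 := by
    rw [hn1sq, hn2sq]
    nlinarith [sq_nonneg (u1 * p2 - u2 * p1)]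
  have hdot : -(n1 * n2) ≤ u1 * p1 + u2 * p2 := by
    nlinarith [mul_pos hn1pos hn2pos, sq_nonneg (u1 * p1 + u2 * p2 + n1 * n2)]
  set w1 : ℝ := -(n2 * u1 + n1 * p1) with hw1
  set w2 : ℝ := -(n2 * u2 + n1 * p2) with hw2
  have hK1 : u1 * w1 + u2 * w2 ≤ 0 := by
    have he : u1 * w1 + u2 * w2 = -(n2 * n1 ^ 2 + n1 * (u1 * p1 + u2 * p2)) := by
      rw [hw1, hw2, hn1sq]; ring
    rw [he]
    nlinarith [mul_nonneg hn1nn (by linarith : (0:ℝ) ≤ u1 * p1 + u2 * p2 + n1 * n2)]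
  have hK2 : p1 * w1 + p2 * w2 ≤ 0 := by
    have he : p1 * w1 + p2 * w2 = -(n1 * n2 ^ 2 + n2 * (u1 * p1 + u2 * p2)) := by
      rw [hw1, hw2, hn2sq]; ring
    rw [he]
    nlinarith [mul_nonneg hn2nn (by linarith : (0:ℝ) ≤ u1 * p1 + u2 * p2 + n1 * n2)]
  have hWpos : 0 < w1 ^ 2 + w2 ^ 2 := by
    rcases (by positivity : (0:ℝ) ≤ w1 ^ 2 + w2 ^ 2).lt_or_eq with h | h
    · exact h
    · exfalso
      have h1 : w1 = 0 := by nlinarith [sq_nonneg w1, sq_nonneg w2]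
      have h2 : w2 = 0 := by nlinarith [sq_nonneg w1, sq_nonneg w2]
      rw [hw1] at h1
      rw [hw2] at h2
      have hz : n2 * (u1 * p2 - u2 * p1) = 0 := by linear_combination (-p2) * h1 + p1 * h2
      rcases mul_eq_zero.mp hz with h | h
      · exact hn2pos.ne' h
      · exact hc h
  set B : ℝ := a1 * w1 + a2 * w2 - x * (|w1| + |w2|) with hB
  refine ⟨(B - 1) / (w1 ^ 2 + w2 ^ 2) * w1, (B - 1) / (w1 ^ 2 + w2 ^ 2) * w2,
    fun s t hs ht hmem => ?_⟩
  obtain ⟨m1, m2, m3, m4⟩ := hmem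
  set z1 : ℝ := (B - 1) / (w1 ^ 2 + w2 ^ 2) * w1 + s * u1 + t * p1 with hz1
  set z2 : ℝ := (B - 1) / (w1 ^ 2 + w2 ^ 2) * w2 + s * u2 + t * p2 with hz2
  have hlow : B ≤ z1 * w1 + z2 * w2 := by
    have h1 : a1 * w1 - x * |w1| ≤ z1 * w1 := by
      rcases abs_cases w1 with ⟨he, hp⟩ | ⟨he, hp⟩
      · rw [he]
        nlinarith [mul_nonneg (by linarith : (0:ℝ) ≤ z1 - a1) hp, mul_nonneg hx.le hp]
      · rw [he]
        nlinarith [mul_nonneg (by linarith : (0:ℝ) ≤ a1 + x - z1) (by linarith : (0:ℝ) ≤ -w1)]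
    have h2 : a2 * w2 - x * |w2| ≤ z2 * w2 := by
      rcases abs_cases w2 with ⟨he, hp⟩ | ⟨he, hp⟩
      · rw [he]
        nlinarith [mul_nonneg (by linarith : (0:ℝ) ≤ z2 - a2) hp, mul_nonneg hx.le hp]
      · rw [he]
        nlinarith [mul_nonneg (by linarith : (0:ℝ) ≤ a2 + x - z2) (by linarith : (0:ℝ) ≤ -w2)]
    rw [hB]; linarith
  have hup : z1 * w1 + z2 * w2 ≤ B - 1 := by
    have he : z1 * w1 + z2 * w2
        = (B - 1) / (w1 ^ 2 + w2 ^ 2) * (w1 ^ 2 + w2 ^ 2)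
          + s * (u1 * w1 + u2 * w2) + t * (p1 * w1 + p2 * w2) := by
      rw [hz1, hz2]; ring
    rw [he, div_mul_cancel₀ _ hWpos.ne']
    nlinarith [mul_nonpos_of_nonneg_of_nonpos hs hK1, mul_nonpos_of_nonneg_of_nonpos ht hK2]
  linarith
end Pf

namespace Pf
variable {m : ℕ} (v : ZMod m → ℝ × ℝ)

lemma avoid (hm : 3 ≤ m) (hcw : ClockwiseConvex v) (a : ℝ × ℝ) (x : ℝ) (hx : 0 < x) :
    ∃ q : ℝ × ℝ, Wedge v 0 q ∩ Set.Icc a (a + (x, x)) = ∅ := by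
  haveI : NeZero m := ⟨by omega⟩
  have hc : cross (v (0 - 1) - v 0) (v (0 + 1) - v 0) ≠ 0 := (cpos v hm hcw 0).ne'
  obtain ⟨q1, q2, hq⟩ := wedge_avoid_gen (v (0 - 1) - v 0).1 (v (0 - 1) - v 0).2
    (v (0 + 1) - v 0).1 (v (0 + 1) - v 0).2 a.1 a.2 x hc hx
  refine ⟨(q1, q2), ?_⟩
  rw [Set.eq_empty_iff_forall_notMem]
  rintro z ⟨⟨s, t, hs, ht, hz⟩, hzQ⟩
  rw [Set.mem_Icc, Prod.le_def, Prod.le_def, Prod.fst_add, Prod.snd_add] at hzQ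
  have hz1 : z.1 = q1 + s * (v (0 - 1) - v 0).1 + t * (v (0 + 1) - v 0).1 := by
    rw [hz]; simp
  have hz2 : z.2 = q2 + s * (v (0 - 1) - v 0).2 + t * (v (0 + 1) - v 0).2 := by
    rw [hz]; simp
  exact hq s t hs ht ⟨hz1 ▸ hzQ.1.1, hz2 ▸ hzQ.1.2, hz1 ▸ hzQ.2.1, hz2 ▸ hzQ.2.2⟩

lemma wedge_translate (k : ZMod m) (p y : ℝ × ℝ) :
    y ∈ Wedge v k (p + v k) ↔ y - p ∈ Wedge v k (v k) := by
  constructor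
  · rintro ⟨s, t, hs, ht, rfl⟩
    exact ⟨s, t, hs, ht, by abel⟩
  · rintro ⟨s, t, hs, ht, h⟩
    refine ⟨s, t, hs, ht, ?_⟩
    rw [sub_eq_iff_eq_add] at h
    rw [h]; abel

lemma dist_le_side {a z y : ℝ × ℝ} {x : ℝ} (hz : z ∈ Set.Icc a (a + (x, x)))
    (hy : y ∈ Set.Icc a (a + (x, x))) : dist z y ≤ x := by
  rw [Set.mem_Icc, Prod.le_def, Prod.le_def, Prod.fst_add, Prod.snd_add] at hz hy
  rw [Prod.dist_eq]
  apply max_le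
  · rw [Real.dist_eq, abs_le]
    constructor
    · have := hz.1.1; have := hy.2.1; simp at *; linarith
    · have := hz.2.1; have := hy.1.1; simp at *; linarith
  · rw [Real.dist_eq, abs_le]
    constructor
    · have := hz.1.2; have := hy.2.2; simp at *; linarith
    · have := hz.2.2; have := hy.1.2; simp at *; linarith
end Pf

namespace Pf
variable {m : ℕ} (v : ZMod m → ℝ × ℝ)

def U (i0 : ZMod m) : Set (ℝ × ℝ) := {z | ∀ j, j ≠ i0 → j ≠ i0 + 1 → fe v j z < 0}

lemma U_open (hm : 3 ≤ m) (i0 : ZMod m) : IsOpen (U v i0) := by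
  haveI : NeZero m := ⟨by omega⟩
  have he : U v i0 = ⋂ j : ZMod m, {z | j ≠ i0 → j ≠ i0 + 1 → fe v j z < 0} := by
    ext z; simp [U, Set.mem_iInter]
  rw [he]
  apply isOpen_iInter_of_finite
  intro j
  by_cases h1 : j = i0
  · convert isOpen_univ using 1
    ext z; simp [h1]
  by_cases h2 : j = i0 + 1
  · convert isOpen_univ using 1
    ext z; simp [h2]
  have he2 : {z : ℝ × ℝ | j ≠ i0 → j ≠ i0 + 1 → fe v j z < 0} = {z | fe v j z < 0} := by
    ext z; simp [h1, h2]
  rw [he2]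
  exact isOpen_lt (fe_cont v j) continuous_const

lemma lebesgue (hm : 3 ≤ m) (hcw : ClockwiseConvex v) :
    ∃ δ > 0, ∀ y ∈ convexHull ℝ (Set.range v), ∃ i0, Metric.ball y δ ⊆ U v i0 := by
  haveI : NeZero m := ⟨by omega⟩
  apply lebesgue_number_lemma_of_metric
  · exact (Set.finite_range v).isCompact_convexHull ℝ
  · exact U_open v hm
  · intro y hy
    obtain ⟨i0, hi0⟩ := cover v hm hcw y hy
    exact Set.mem_iUnion.mpr ⟨i0, hi0⟩
end Pf

/-- For a closed convex polygon `S = conv {v 1, …, v m}` there is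
`x > 0` such that every translate of `S` intersects every closed axis-parallel square of
side `x` exactly like the translate of one of the wedges of `S`. -/
theorem translate_meets_small_square_like_wedge
    (m : ℕ) (hm : 3 ≤ m) (v : ZMod m → ℝ × ℝ) (hcw : ClockwiseConvex v) :
    ∃ x : ℝ, 0 < x ∧
      ∀ a p : ℝ × ℝ, ∃ (i : ZMod m) (q : ℝ × ℝ),
        {y : ℝ × ℝ | y - p ∈ convexHull ℝ (Set.range v)} ∩ Set.Icc a (a + (x, x))
          = Wedge v i q ∩ Set.Icc a (a + (x, x)) := by
  haveI : NeZero m := ⟨by omega⟩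
  obtain ⟨δ, hδ, hleb⟩ := Pf.lebesgue v hm hcw
  refine ⟨δ / 2, by positivity, fun a p => ?_⟩
  by_cases hne : ({y : ℝ × ℝ | y - p ∈ convexHull ℝ (Set.range v)} ∩
      Set.Icc a (a + (δ / 2, δ / 2))).Nonempty
  · obtain ⟨y0, hy0S, hy0Q⟩ := hne
    obtain ⟨i0, hi0⟩ := hleb (y0 - p) hy0S
    refine ⟨i0 + 1, p + v (i0 + 1), ?_⟩
    ext z
    simp only [Set.mem_inter_iff, Set.mem_setOf_eq]
    constructor
    · rintro ⟨hzS, hzQ⟩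
      refine ⟨?_, hzQ⟩
      rw [Pf.wedge_translate, Pf.wedge_mem_iff v hm hcw, add_sub_cancel_right]
      have hall := Pf.hull_subset v hcw hzS
      exact ⟨hall i0, hall (i0 + 1)⟩
    · rintro ⟨hzW, hzQ⟩
      refine ⟨?_, hzQ⟩
      rw [Pf.wedge_translate, Pf.wedge_mem_iff v hm hcw, add_sub_cancel_right] at hzW
      apply Pf.subset_hull v hm hcw
      intro j
      by_cases h1 : j = i0
      · subst h1; exact hzW.1
      by_cases h2 : j = i0 + 1
      · subst h2; exact hzW.2
      · have hball : z - p ∈ Metric.ball (y0 - p) δ := by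
          rw [Metric.mem_ball]
          have he : dist (z - p) (y0 - p) = dist z y0 := by
            rw [dist_eq_norm, dist_eq_norm]
            congr 1
            abel
          rw [he]
          calc dist z y0 ≤ δ / 2 := Pf.dist_le_side hzQ hy0Q
            _ < δ := by linarith
        exact (hi0 hball j h1 h2).le
  · obtain ⟨q, hq⟩ := Pf.avoid v hm hcw a (δ / 2) (by positivity)
    refine ⟨0, q, ?_⟩
    rw [hq, Set.not_nonempty_iff_eq_empty.mp hne]
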